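/- Let n ≥ 1 and let G=(V,E) be a digraph with a partition (V₀,V₁,…,V_k) of V such that: every induced subgraph of G[V₀] is in O_{n+1}, every induced subgraph of G[V_i] is in O_n for 1 ≤ i < k, and G[V_k] is in O_n (when k ≥ 1). Then G is in O_{n+1}. -/
import Mathlib


/-- There is a directed path of length at most `n` from `x` to `y`. -/
def PathLe {V : Type*} (E : V → V → Prop) (n : ℕ) (x y : V) : Prop :=
  ∃ k ≤ n, ∃ f : ℕ → V, f 0 = x ∧ f k = y ∧ ∀ i < k, E (f i) (f (i + 1))

/-- A directed path of length at most `n` from `x` to `y` all of whose vertices lie in `W`. -/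
def PathLeIn {V : Type*} (E : V → V → Prop) (W : Set V) (n : ℕ) (x y : V) : Prop :=
  ∃ k ≤ n, ∃ f : ℕ → V, f 0 = x ∧ f k = y ∧ (∀ i ≤ k, f i ∈ W) ∧ ∀ i < k, E (f i) (f (i + 1))

/-- `A` spans no edges of `E` (in either direction). -/
def Indep {V : Type*} (E : V → V → Prop) (A : Set V) : Prop :=
  ∀ a ∈ A, ∀ b ∈ A, ¬ E a b

/-- The induced subgraph on `W` is in the class `O_n`: some independent set `A ⊆ W`
reaches every vertex of `W` by a directed path of length at most `n` inside `W`. -/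
def OutClass {V : Type*} (E : V → V → Prop) (n : ℕ) (W : Set V) : Prop :=
  ∃ A ⊆ W, Indep E A ∧ ∀ v ∈ W, ∃ a ∈ A, PathLeIn E W n a v

/-- The induced subgraph on `W` is in the class `I_n`: some independent set `A ⊆ W`
is reached from every vertex of `W` by a directed path of length at most `n` inside `W`. -/
def InClass {V : Type*} (E : V → V → Prop) (n : ℕ) (W : Set V) : Prop :=
  ∃ A ⊆ W, Indep E A ∧ ∀ v ∈ W, ∃ a ∈ A, PathLeIn E W n v a

/-- The induced subgraph on `W` is in `IO(m, ℓ)`. -/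
def IOClass {V : Type*} (E : V → V → Prop) (m ℓ : ℕ) (W : Set V) : Prop :=
  ∃ V₁ V₂ : Set V, V₁ ∪ V₂ = W ∧ Disjoint V₁ V₂ ∧ InClass E m V₁ ∧ OutClass E ℓ V₂

/-- `E` is a tournament: no loops and exactly one direction between distinct vertices. -/
def IsTournament {V : Type*} (E : V → V → Prop) : Prop :=
  (∀ x, ¬ E x x) ∧ ∀ x y, x ≠ y → (E x y ↔ ¬ E y x)



lemma pathLeIn_refl {V : Type*} {E : V → V → Prop} {W : Set V} {v : V} (hv : v ∈ W) :
    PathLeIn E W 0 v v :=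
  ⟨0, le_refl 0, fun _ => v, rfl, rfl, fun _ _ => hv, fun i hi => absurd hi (Nat.not_lt_zero i)⟩

lemma pathLeIn_mono {V : Type*} {E : V → V → Prop} {W W' : Set V} {n n' : ℕ} {x y : V}
    (hW : W ⊆ W') (hn : n ≤ n') (h : PathLeIn E W n x y) : PathLeIn E W' n' x y := by
  obtain ⟨k, hk, f, h0, hk', hmem, hedge⟩ := h
  exact ⟨k, hk.trans hn, f, h0, hk', fun i hi => hW (hmem i hi), hedge⟩

lemma pathLeIn_cons {V : Type*} {E : V → V → Prop} {W : Set V} {n : ℕ} {x y b : V}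
    (hb : b ∈ W) (hE : E b x) (h : PathLeIn E W n x y) : PathLeIn E W (n + 1) b y := by
  obtain ⟨k, hk, f, h0, hk', hmem, hedge⟩ := h
  refine ⟨k + 1, by omega, fun i => match i with | 0 => b | (j+1) => f j, rfl, hk', ?_, ?_⟩
  · intro i hi
    match i with
    | 0 => exact hb
    | (j+1) => exact hmem j (by omega)
  · intro i hi
    match i with
    | 0 => show E b (f 0); rw [h0]; exact hE
    | (j+1) => exact hedge j (by omega)

lemma aux_step {V : Type*} (E : V → V → Prop) (n : ℕ) (hn : 1 ≤ n) :
    ∀ k (W : Set V) (Q : ℕ → Set V),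
      (∀ v ∈ W, ∃ i ≤ k, v ∈ Q i) →
      (∀ i ≤ k, Q i ⊆ W) →
      (∀ W' ⊆ Q 0, OutClass E (n + 1) W') →
      (∀ i, 0 < i → i < k → ∀ W' ⊆ Q i, OutClass E n W') →
      (1 ≤ k → OutClass E n (Q k)) →
      OutClass E (n + 1) W := by
  intro k
  induction k with
  | zero =>
    intro W Q hcover _ h0 _ _
    have hWQ : W ⊆ Q 0 := by
      intro v hv
      obtain ⟨i, hi, hvi⟩ := hcover v hv
      interval_cases i
      exact hvi
    exact h0 W hWQ
  | succ m ih =>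
    intro W Q hcover hsub h0 hmid hlast
    obtain ⟨A, hAQ, hAind, hAcov⟩ := hlast (by omega)
    set U : Set V := {v | v ∈ W ∧ v ∉ Q (m + 1) ∧ ∀ a ∈ A, ¬ E a v} with hUdef
    have hUW : U ⊆ W := fun v hv => hv.1
    have hQW : Q (m + 1) ⊆ W := hsub (m + 1) le_rfl
    obtain ⟨B, hBU, hBind, hBcov⟩ := ih U (fun i => Q i ∩ U)
      (by
        intro v hv
        obtain ⟨i, hi, hvi⟩ := hcover v (hUW hv)
        refine ⟨i, ?_, hvi, hv⟩
        rcases Nat.lt_or_ge i (m + 1) with h | h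
        · omega
        · exfalso; have : i = m + 1 := by omega
          exact hv.2.1 (this ▸ hvi))
      (fun i _ => Set.inter_subset_right)
      (fun W' hW' => h0 W' (hW'.trans Set.inter_subset_left))
      (fun i hi him W' hW' => hmid i hi (by omega) W' (hW'.trans Set.inter_subset_left))
      (fun hm => hmid m hm (by omega) _ Set.inter_subset_left)
    refine ⟨B ∪ {a ∈ A | ∀ b ∈ B, ¬ E b a}, ?_, ?_, ?_⟩
    · intro x hx
      rcases hx with hx | hx
      · exact hUW (hBU hx)
      · exact hQW (hAQ hx.1)
    · intro x hx y hy
      rcases hx with hx | hx <;> rcases hy with hy | hy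
      · exact hBind x hx y hy
      · exact hy.2 x hx
      · exact (hBU hy).2.2 x hx.1
      · exact hAind x hx.1 y hy.1
    · intro v hv
      by_cases hvk : v ∈ Q (m + 1)
      · obtain ⟨a, ha, hpath⟩ := hAcov v hvk
        by_cases hab : ∀ b ∈ B, ¬ E b a
        · exact ⟨a, Or.inr ⟨ha, hab⟩, pathLeIn_mono hQW (by omega) hpath⟩
        · push_neg at hab
          obtain ⟨b, hb, hEba⟩ := hab
          exact ⟨b, Or.inl hb, pathLeIn_cons (hUW (hBU hb)) hEba
            (pathLeIn_mono hQW le_rfl hpath)⟩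
      · by_cases hvU : v ∈ U
        · obtain ⟨b, hb, hpath⟩ := hBcov v hvU
          exact ⟨b, Or.inl hb, pathLeIn_mono hUW le_rfl hpath⟩
        · have hav : ∃ a ∈ A, E a v := by
            by_contra hcon
            push_neg at hcon
            exact hvU ⟨hv, hvk, hcon⟩
          obtain ⟨a, ha, hEav⟩ := hav
          have haW : a ∈ W := hQW (hAQ ha)
          by_cases hab : ∀ b ∈ B, ¬ E b a
          · exact ⟨a, Or.inr ⟨ha, hab⟩, pathLeIn_mono (le_refl W).subset (by omega)
              (pathLeIn_cons haW hEav (pathLeIn_refl hv))⟩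
          · push_neg at hab
            obtain ⟨b, hb, hEba⟩ := hab
            refine ⟨b, Or.inl hb, pathLeIn_mono (le_refl W).subset (by omega)
              (pathLeIn_cons (hUW (hBU hb)) hEba (pathLeIn_cons haW hEav (pathLeIn_refl hv)))⟩

/-- Stepping-up theorem for the classes `O_n`. -/
theorem stepping_up_out {V : Type*} (E : V → V → Prop) (n k : ℕ) (hn : 1 ≤ n)
    (P : Fin (k + 1) → Set V)
    (hcover : (⋃ i, P i) = Set.univ)
    (hdisj : ∀ i j, i ≠ j → Disjoint (P i) (P j))
    (h0 : ∀ W ⊆ P 0, OutClass E (n + 1) W)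
    (hmid : ∀ i : Fin (k + 1), 0 < (i : ℕ) → (i : ℕ) < k → ∀ W ⊆ P i, OutClass E n W)
    (hlast : 1 ≤ k → OutClass E n (P (Fin.last k))) :
    OutClass E (n + 1) Set.univ := by
  apply aux_step E n hn k Set.univ (fun i => P ⟨min i k, Nat.lt_succ_of_le (Nat.min_le_right i k)⟩)
  · intro v _
    have : v ∈ ⋃ i, P i := hcover ▸ Set.mem_univ v
    obtain ⟨j, hj⟩ := Set.mem_iUnion.mp this
    refine ⟨j.val, Nat.lt_succ_iff.mp j.isLt, ?_⟩
    have : (⟨min j.val k, Nat.lt_succ_of_le (Nat.min_le_right _ k)⟩ : Fin (k+1)) = j := by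
      apply Fin.ext
      simp [Nat.min_eq_left (Nat.lt_succ_iff.mp j.isLt)]
    rw [this]; exact hj
  · intro i _; exact Set.subset_univ _
  · have : (⟨min 0 k, Nat.lt_succ_of_le (Nat.min_le_right 0 k)⟩ : Fin (k+1)) = 0 := by
      apply Fin.ext; simp
    rw [this]; exact h0
  · intro i hi hik W hW
    have hik' : min i k = i := Nat.min_eq_left (by omega)
    refine hmid ⟨min i k, Nat.lt_succ_of_le (Nat.min_le_right i k)⟩ ?_ ?_ W hW <;> simp [hik']
    · omega
    · omega
  · intro hk
    have : (⟨min k k, Nat.lt_succ_of_le (Nat.min_le_right k k)⟩ : Fin (k+1)) = Fin.last k := by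
      apply Fin.ext; simp [Fin.last]
    rw [this]; exact hlast hk
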